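/- Let Σ₂ = {a,b}, k ∈ ℕ, and 0 ≤ m < k. The number of congruence classes of ∼_k consisting of binary words with exactly m arches, i.e., the cardinality of { [w]_{∼_k} : w ∈ Σ₂*, ι(w) = m }, equals ‖D^m · e‖₁, where D is the 3×3 integer matrix with rows (k−m, k−m, k−m), (1, 2, 1), (k−m, k−m, k−m), e is the column vector (k−m, 1, k−m)ᵀ, and ‖·‖₁ denotes the sum of the (nonnegative) entries. -/

import Mathlib

open List

variable {α : Type*} [DecidableEq α] [Fintype α]

/-- Simon `k`-congruence: `u` and `v` have the same scattered factors
(subsequences) of length at most `k`. -/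
def SimonCongr (k : ℕ) (u v : List α) : Prop :=
  ∀ s : List α, s.length ≤ k → (s.Sublist u ↔ s.Sublist v)

/-- `w` is `k`-universal with respect to the alphabet `S`: every word of length `k`
over `S` is a scattered factor of `w`. -/
def UniversalOn (S : Finset α) (k : ℕ) (w : List α) : Prop :=
  ∀ s : List α, s.length = k → (∀ x ∈ s, x ∈ S) → s.Sublist w

/-- The universality index of `w` w.r.t. the alphabet `S`. -/
noncomputable def iotaOn (S : Finset α) (w : List α) : ℕ :=
  sSup {k | UniversalOn S k w}

/-- The universality index of `w` w.r.t. the full alphabet. -/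
noncomputable def iotaUniv (w : List α) : ℕ := iotaOn Finset.univ w

/-- `a` is an arch w.r.t. `S`: it contains every letter of `S`, and its last letter
belongs to `S` and occurs exactly once in `a`. -/
def IsArchOn (S : Finset α) (a : List α) : Prop :=
  (∀ x ∈ S, x ∈ a) ∧ ∃ a' x, a = a' ++ [x] ∧ x ∈ S ∧ x ∉ a'

/-- `(ars, r)` is the arch factorization of `w` w.r.t. `S`. -/
def IsArchFactOn (S : Finset α) (w : List α) (ars : List (List α)) (r : List α) : Prop :=
  w = ars.flatten ++ r ∧ (∀ a ∈ ars, IsArchOn S a) ∧ ¬ (∀ x ∈ S, x ∈ r)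

/-- `(A, B)` is the α-β-factorization of `w` with `m` arches:
`αᵢ₋₁βᵢ` (for `i ∈ [m]`) together with rest `α_m` is the arch factorization of `w`, and
`(β_{m-i}α_{m-i})^R` together with rest `α₀^R` is the arch factorization of `w^R`. -/
def IsAlphaBetaFact (w : List α) (m : ℕ) (A B : ℕ → List α) : Prop :=
  IsArchFactOn Finset.univ w (List.ofFn fun i : Fin m => A i.val ++ B (i.val + 1)) (A m) ∧
  IsArchFactOn Finset.univ w.reverse
    (List.ofFn fun i : Fin m => (B (m - i.val) ++ A (m - i.val)).reverse) ((A 0).reverse)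

/-- The concatenation `αᵢ βᵢ₊₁ αᵢ₊₁ ⋯ βⱼ αⱼ`. -/
def abSeg (A B : ℕ → List α) (i j : ℕ) : List α :=
  A i ++ (((List.Ico (i + 1) (j + 1)).map fun l => B l ++ A l).flatten)

/-- The core of a `β`-factor: the factor with its first and last letter removed. -/
def coreOf (b : List α) : List α := (b.drop 1).dropLast

/-- The 3×3 matrix with rows `(k−m, k−m, k−m)`, `(1, 2, 1)`, `(k−m, k−m, k−m)`. -/
def matD (k m : ℕ) : Matrix (Fin 3) (Fin 3) ℤ :=
  !![(k : ℤ) - (m : ℤ), (k : ℤ) - (m : ℤ), (k : ℤ) - (m : ℤ);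
     1, 2, 1;
     (k : ℤ) - (m : ℤ), (k : ℤ) - (m : ℤ), (k : ℤ) - (m : ℤ)]

/-- The column vector `(k−m, 1, k−m)ᵀ`. -/
def vecE (k m : ℕ) : Fin 3 → ℤ := ![(k : ℤ) - (m : ℤ), 1, (k : ℤ) - (m : ℤ)]

namespace BinSimon


lemma bool_ne_iff {x y : Bool} : x ≠ y ↔ x = !y := by
  cases x <;> cases y <;> simp

/-- Peel a replicate prefix on both sides. -/
lemma rep_cancel {x : Bool} {p : ℕ} {s w : List Bool}
    (h : replicate p x ++ s <+ replicate p x ++ w) : s <+ w := by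
  induction p with
  | zero => simpa using h
  | succ n ih =>
    rw [replicate_succ, cons_append, cons_append, List.cons_sublist_cons] at h
    exact ih h

/-- A word starting with `y ≠ x` sublist of `x^p ++ w` embeds into `w`. -/
lemma skip_block {x y : Bool} (hxy : y ≠ x) {p : ℕ} {s w : List Bool}
    (h : y :: s <+ replicate p x ++ w) : y :: s <+ w := by
  induction p with
  | zero => simpa using h
  | succ n ih =>
    rw [replicate_succ, cons_append] at h
    rcases List.sublist_cons_iff.mp h with h' | ⟨r, hr, _⟩
    · exact ih h'
    · injection hr with h1 _; exact absurd h1 hxy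

lemma sublist_append_left' {l r : List Bool} (pre : List Bool) (h : l <+ r) :
    l <+ pre ++ r := h.trans (List.sublist_append_right pre r)

/-! ### Arch counting -/

/-- Arch counting automaton. -/
def archS : Option Bool → List Bool → ℕ
  | _, [] => 0
  | none, c :: w => archS (some c) w
  | some d, c :: w => if c = d then archS (some d) w else 1 + archS none w

/-- Number of arches of a binary word. -/
def archNum (w : List Bool) : ℕ := archS none w

@[simp] lemma archS_nil (st : Option Bool) : archS st [] = 0 := by cases st <;> rfl
@[simp] lemma archNum_nil : archNum ([] : List Bool) = 0 := rfl

lemma archS_none_cons (c : Bool) (w : List Bool) : archS none (c :: w) = archS (some c) w := rfl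

lemma archS_some_same (d : Bool) (w : List Bool) : archS (some d) (d :: w) = archS (some d) w := by
  simp [archS]

lemma archS_some_diff (d : Bool) (w : List Bool) :
    archS (some d) ((!d) :: w) = 1 + archS none w := by
  simp [archS]

lemma archS_some_replicate (d : Bool) (p : ℕ) (w : List Bool) :
    archS (some d) (replicate p d ++ w) = archS (some d) w := by
  induction p with
  | zero => rfl
  | succ n ih => rw [replicate_succ, cons_append, archS_some_same, ih]

/-- Key structure lemma: an initial block followed by the other letter is one arch. -/
lemma archS_none_replicate (x : Bool) (Q : ℕ) (w : List Bool) :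
    archS none (replicate (Q + 1) x ++ w) = archS (some x) w := by
  rw [replicate_succ, cons_append, archS_none_cons, archS_some_replicate]

lemma archNum_arch {x : Bool} {P : ℕ} (hP : 1 ≤ P) (w : List Bool) :
    archNum (replicate P x ++ (!x) :: w) = 1 + archNum w := by
  obtain ⟨Q, rfl⟩ := Nat.exists_eq_add_of_le hP
  rw [add_comm]
  show archS none _ = _
  rw [archS_none_replicate, archS_some_diff]; rfl

lemma archNum_replicate (x : Bool) (p : ℕ) : archNum (replicate p x) = 0 := by
  cases p with
  | zero => rfl
  | succ n =>
    show archS none _ = 0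
    rw [replicate_succ, archS_none_cons, ← append_nil (replicate n x), archS_some_replicate]
    rfl

/-- Joint monotonicity of the automaton in the state. -/
lemma archS_state_le (w : List Bool) :
    ∀ d : Bool, archS none w ≤ archS (some d) w ∧ archS (some d) w ≤ 1 + archS none w := by
  induction w with
  | nil => simp
  | cons c w ih =>
    intro d
    by_cases hcd : c = d
    · subst hcd
      rw [archS_some_same, archS_none_cons]
      exact ⟨le_refl _, Nat.le_add_left _ 1⟩
    · have hcd' : c = !d := bool_ne_iff.mp hcd
      subst hcd'
      rw [archS_some_diff, archS_none_cons]
      have h1 := (ih d).1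
      have h2 := (ih d).2
      -- note : !d with state some d: c = !d, and archS (some (!d)) w relevant
      constructor
      · have := (ih (!d)).2
        omega
      · have := (ih (!d)).1
        omega

lemma archNum_cons_le (c : Bool) (w : List Bool) : archNum (c :: w) ≤ 1 + archNum w :=
  (archS_state_le w c).2

lemma le_archNum_cons (c : Bool) (w : List Bool) : archNum w ≤ archNum (c :: w) :=
  (archS_state_le w c).1

lemma archNum_cons_head (c : Bool) (w : List Bool) :
    archNum (c :: c :: w) = archNum (c :: w) := by
  show archS (some c) (c :: w) = _
  rw [archS_some_same]; rfl

lemma archNum_replicate_append {x : Bool} {P : ℕ} (hP : 1 ≤ P) (w : List Bool) :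
    archNum (replicate P x ++ w) = archNum (x :: w) := by
  obtain ⟨Q, rfl⟩ := Nat.exists_eq_add_of_le hP
  rw [add_comm]
  show archS none _ = archS none _
  rw [archS_none_replicate, archS_none_cons]


/-! ### Block decomposition -/

lemma takeWhile_rep_block {x : Bool} (p : ℕ) (u : List Bool) :
    (replicate p x ++ (!x) :: u).takeWhile (· = x) = replicate p x ∧
    (replicate p x ++ (!x) :: u).dropWhile (· = x) = (!x) :: u := by
  induction p with
  | zero => simp
  | succ n ih =>
    rw [replicate_succ, cons_append]
    constructor
    · rw [takeWhile_cons]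
      simp only [decide_eq_true_eq, if_pos rfl, if_true, decide_true]
      exact congrArg (x :: ·) ih.1
    · rw [dropWhile_cons]
      simp only [decide_eq_true_eq, if_pos rfl]
      exact ih.2

/-- Unique block representation. -/
lemma block_repr_eq {x : Bool} {p q : ℕ} {u v : List Bool}
    (h : replicate p x ++ (!x) :: u = replicate q x ++ (!x) :: v) : p = q ∧ u = v := by
  have h1 := congrArg (List.takeWhile (· = x)) h
  have h2 := congrArg (List.dropWhile (· = x)) h
  rw [(takeWhile_rep_block p u).1, (takeWhile_rep_block q v).1] at h1
  rw [(takeWhile_rep_block p u).2, (takeWhile_rep_block q v).2] at h2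
  refine ⟨?_, by injection h2⟩
  have := congrArg List.length h1
  simpa using this

/-- Every word is empty, a single block, or block + other letter + rest. -/
lemma block_cases (w : List Bool) :
    w = [] ∨ (∃ x p, 1 ≤ p ∧ w = replicate p x) ∨
      (∃ x p w₂, 1 ≤ p ∧ w = replicate p x ++ (!x) :: w₂) := by
  cases w with
  | nil => exact Or.inl rfl
  | cons c t =>
    right
    have hw : (c :: t).takeWhile (· = c) ++ (c :: t).dropWhile (· = c) = c :: t :=
      takeWhile_append_dropWhile
    have htake : (c :: t).takeWhile (· = c) =
        replicate ((c :: t).takeWhile (· = c)).length c :=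
      List.eq_replicate_of_mem (fun b hb => by simpa using List.mem_takeWhile_imp hb)
    have hp : 1 ≤ ((c :: t).takeWhile (· = c)).length := by
      rw [takeWhile_cons]; simp
    cases hrc : (c :: t).dropWhile (· = c) with
    | nil =>
      left
      refine ⟨c, ((c :: t).takeWhile (· = c)).length, hp, ?_⟩
      rw [← htake]
      conv_lhs => rw [← hw]
      rw [hrc, append_nil]
    | cons y w₂ =>
      right
      have hy : y = !c := by
        have hne : (c :: t).dropWhile (· = c) ≠ [] := by rw [hrc]; simp
        have := List.head_dropWhile_not (· = c) hne
        apply bool_ne_iff.mp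
        intro hyc
        rw [show ((c :: t).dropWhile (· = c)).head hne = y from by
          simp only [hrc]; rfl] at this
        rw [hyc] at this
        simp at this
      refine ⟨c, ((c :: t).takeWhile (· = c)).length, w₂, hp, ?_⟩
      rw [← htake]
      conv_lhs => rw [← hw]
      rw [hrc, hy]

/-! ### Universality and bad words -/

/-- Any word of length at most the arch number is a scattered factor. -/
lemma universal_sublist : ∀ (s w : List Bool), s.length ≤ archNum w → s <+ w := by
  intro s
  induction s with
  | nil => intro w _; exact nil_sublist w
  | cons c s ih =>
    intro w hlen
    have h1 : 1 ≤ archNum w := le_trans (by simp) hlen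
    rcases block_cases w with rfl | ⟨x, p, hp, rfl⟩ | ⟨x, p, w₂, hp, rfl⟩
    · simp at h1
    · rw [archNum_replicate] at h1; omega
    · rw [archNum_arch hp] at hlen
      simp only [length_cons] at hlen
      have hs : s <+ w₂ := ih w₂ (by omega)
      by_cases hc : c = x
      · subst hc
        have : [c] ++ s <+ replicate p c ++ ((!c) :: w₂) :=
          List.Sublist.append (by simpa using (List.replicate_sublist_replicate c).mpr hp)
            (hs.trans (List.sublist_cons_self (!c) w₂))
        simpa using this
      · have hc' : c = !x := bool_ne_iff.mp hc
        subst hc'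
        exact sublist_append_left' _ (List.cons_sublist_cons.mpr hs)

/-- Bad word lemma. -/
lemma bad_word : ∀ (n : ℕ) (w : List Bool), w.length ≤ n → ∀ x : Bool, w.head? ≠ some x →
    ∃ ρ : List Bool, ρ.length = archNum w ∧ ¬ (x :: ρ) <+ w := by
  intro n
  induction n with
  | zero =>
    intro w hw x _
    have : w = [] := List.eq_nil_of_length_eq_zero (Nat.le_zero.mp hw)
    subst this
    exact ⟨[], by simp, by simp⟩
  | succ n ih =>
    intro w hw x hx
    rcases block_cases w with rfl | ⟨y, p, hp, rfl⟩ | ⟨y, p, w₂, hp, rfl⟩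
    · exact ⟨[], by simp, by simp⟩
    · refine ⟨[], by simp [archNum_replicate], ?_⟩
      intro hsub
      have hmem : x ∈ replicate p y := hsub.subset (by simp)
      have hxy : x = y := List.eq_of_mem_replicate hmem
      apply hx
      rw [hxy]
      obtain ⟨q, rfl⟩ := Nat.exists_eq_add_of_le hp
      rw [add_comm, replicate_succ]
      rfl
    · -- w = y^p ++ (!y) :: w₂
      have hheady : (replicate p y ++ (!y) :: w₂).head? = some y := by
        obtain ⟨q, rfl⟩ := Nat.exists_eq_add_of_le hp
        rw [add_comm, replicate_succ]
        rfl
      have hxy : x = !y := by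
        apply bool_ne_iff.mp
        intro hxy
        exact hx (by rw [hxy, hheady])
      set x₂ : Bool := match w₂.head? with | none => y | some c => !c with hx₂
      have hx₂ne : w₂.head? ≠ some x₂ := by
        cases hh : w₂.head? with
        | none => simp
        | some c => rw [hx₂, hh]; simp
      have hlen₂ : w₂.length ≤ n := by
        have hlw : (replicate p y ++ (!y) :: w₂).length = p + 1 + w₂.length := by
          simp; omega
        omega
      obtain ⟨ρ₂, hρ₂len, hρ₂⟩ := ih w₂ hlen₂ x₂ hx₂ne
      refine ⟨x₂ :: ρ₂, ?_, ?_⟩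
      · simp [archNum_arch hp, hρ₂len, Nat.add_comm]
      · intro hsub
        rw [hxy] at hsub
        have h2 : (!y) :: x₂ :: ρ₂ <+ (!y) :: w₂ := skip_block (by simp) hsub
        exact hρ₂ (List.cons_sublist_cons.mp h2)

lemma archNum_mono {u w : List Bool} (h : u <+ w) : archNum u ≤ archNum w := by
  by_contra hlt
  push_neg at hlt
  set x : Bool := match w.head? with | none => true | some c => !c with hx
  have hxne : w.head? ≠ some x := by
    cases hh : w.head? with
    | none => simp
    | some c => rw [hx, hh]; simp
  obtain ⟨ρ, hρlen, hρ⟩ := bad_word w.length w le_rfl x hxne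
  have hle : (x :: ρ).length ≤ archNum u := by simp [hρlen]; omega
  exact hρ ((universal_sublist _ u hle).trans h)



/-! ### iota = archNum -/

lemma exists_nonsublist {w : List Bool} {j : ℕ} (h : archNum w < j) :
    ∃ t : List Bool, t.length = j ∧ ¬ t <+ w := by
  set x : Bool := match w.head? with | none => true | some c => !c with hx
  have hxne : w.head? ≠ some x := by
    cases hh : w.head? with
    | none => simp
    | some c => rw [hx, hh]; simp
  obtain ⟨ρ, hρlen, hρ⟩ := bad_word w.length w le_rfl x hxne
  refine ⟨x :: (ρ ++ replicate (j - archNum w - 1) x), by simp [hρlen]; omega, ?_⟩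
  intro hsub
  exact hρ ((List.cons_sublist_cons.mpr (List.sublist_append_left ρ _)).trans hsub)

lemma universalOn_iff {j : ℕ} {w : List Bool} :
    UniversalOn Finset.univ j w ↔ j ≤ archNum w := by
  constructor
  · intro h
    by_contra hlt
    push_neg at hlt
    obtain ⟨t, htl, ht⟩ := exists_nonsublist hlt
    exact ht (h t htl (fun x _ => Finset.mem_univ x))
  · intro h s hs _
    exact universal_sublist s w (hs ▸ h)

lemma iotaUniv_eq_archNum (w : List Bool) : iotaUniv w = archNum w := by
  have : {k | UniversalOn Finset.univ k w} = Set.Iic (archNum w) := by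
    ext j; simpa [Set.mem_Iic] using universalOn_iff
  rw [iotaUniv, iotaOn, this, csSup_Iic]

/-! ### Simon congruence basics -/

lemma simonRefl (k : ℕ) (u : List Bool) : SimonCongr k u u := fun _ _ => Iff.rfl

lemma simonSymm {k : ℕ} {u v : List Bool} (h : SimonCongr k u v) : SimonCongr k v u :=
  fun s hs => (h s hs).symm

lemma simonTrans {k : ℕ} {u v w : List Bool} (h1 : SimonCongr k u v)
    (h2 : SimonCongr k v w) : SimonCongr k u w :=
  fun s hs => (h1 s hs).trans (h2 s hs)

lemma congr_prepend {k : ℕ} (z : List Bool) {u v : List Bool} (h : SimonCongr k u v) :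
    SimonCongr k (z ++ u) (z ++ v) := by
  have key : ∀ u' v' : List Bool, (∀ s : List Bool, s.length ≤ k → s <+ u' → s <+ v') →
      ∀ s : List Bool, s.length ≤ k → s <+ z ++ u' → s <+ z ++ v' := by
    intro u' v' huv s hs hsub
    obtain ⟨s₁, s₂, rfl, h1, h2⟩ := List.sublist_append_iff.mp hsub
    have : s₂ <+ v' := huv s₂ (by simp at hs; omega) h2
    exact List.Sublist.append h1 this
  intro s hs
  constructor
  · exact key u v (fun s hs h' => (h s hs).mp h') s hs
  · exact key v u (fun s hs h' => (h s hs).mpr h') s hs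

lemma arch_le_transfer {k : ℕ} {u v : List Bool} (h : SimonCongr k u v)
    (hu : archNum u < k) : archNum v ≤ archNum u := by
  by_contra hlt
  push_neg at hlt
  obtain ⟨t, htl, ht⟩ := exists_nonsublist (w := u) (j := archNum u + 1) (by omega)
  exact ht ((h t (by omega)).mpr (universal_sublist t v (by omega)))

lemma arch_eq_transfer {k : ℕ} {u v : List Bool} (h : SimonCongr k u v)
    (hu : archNum u < k) : archNum v = archNum u := by
  have h1 := arch_le_transfer h hu
  have h2 := arch_le_transfer (simonSymm h) (lt_of_le_of_lt h1 hu)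
  omega

/-! ### Reduction and extension -/

lemma reduction {p q : List Bool} {x : Bool} {n k : ℕ} (h1 : 1 ≤ n)
    (h2 : k + 1 ≤ n + archNum p + archNum q) :
    SimonCongr k (p ++ replicate n x ++ q) (p ++ replicate (n - 1) x ++ q) := by
  intro s hs
  constructor
  · intro hsub
    rw [append_assoc, List.sublist_append_iff] at hsub
    obtain ⟨s₁, s₂₃, rfl, hs₁, hs₂₃⟩ := hsub
    rw [List.sublist_append_iff] at hs₂₃
    obtain ⟨s₂, s₃, rfl, hs₂, hs₃⟩ := hs₂₃
    have h2l : s₂.length ≤ n := by simpa using hs₂.length_le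
    have h2e : s₂ = replicate s₂.length x :=
      List.eq_replicate_of_mem (fun b hb => List.eq_of_mem_replicate (hs₂.subset hb))
    set j := s₂.length with hj
    by_cases hjn : j ≤ n - 1
    · rw [append_assoc]
      refine List.Sublist.append hs₁ (List.Sublist.append ?_ hs₃)
      rw [h2e]
      exact (List.replicate_sublist_replicate x).mpr hjn
    · have hj' : j = n := by omega
      have hlen : s₁.length + n + s₃.length ≤ k := by
        simp only [List.length_append] at hs
        omega
      rcases Nat.lt_or_ge s₁.length (archNum p) with hcase | hcase
      · have hnew : s₁ ++ [x] <+ p := universal_sublist _ p (by simp; omega)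
        have hmain : (s₁ ++ [x]) ++ (replicate (n - 1) x ++ s₃) <+
            p ++ (replicate (n - 1) x ++ q) :=
          List.Sublist.append hnew (List.Sublist.append (List.Sublist.refl _) hs₃)
        have hrep : [x] ++ replicate (n - 1) x = replicate n x := by
          rw [singleton_append, ← replicate_succ]
          congr 1
          omega
        have heq : (s₁ ++ [x]) ++ (replicate (n - 1) x ++ s₃) =
            s₁ ++ (s₂ ++ s₃) := by
          rw [h2e, hj', ← hrep]
          simp [append_assoc]
        rw [heq] at hmain
        rw [append_assoc]
        exact hmain
      · have hq : s₃.length < archNum q := by omega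
        have hnew : x :: s₃ <+ q := universal_sublist _ q (by simp; omega)
        have hmain : s₁ ++ (replicate (n - 1) x ++ (x :: s₃)) <+
            p ++ (replicate (n - 1) x ++ q) :=
          List.Sublist.append hs₁ (List.Sublist.append (List.Sublist.refl _) hnew)
        have hrep : replicate (n - 1) x ++ [x] = replicate n x := by
          rw [← replicate_succ']
          congr 1
          omega
        have heq : s₁ ++ (replicate (n - 1) x ++ (x :: s₃)) =
            s₁ ++ (s₂ ++ s₃) := by
          congr 1
          rw [h2e, hj', ← hrep]
          rw [show x :: s₃ = [x] ++ s₃ from rfl, ← append_assoc, append_assoc]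
        rw [heq] at hmain
        rw [append_assoc]
        exact hmain
  · intro hsub
    refine hsub.trans ?_
    exact List.Sublist.append (List.Sublist.append (List.Sublist.refl p)
      ((List.replicate_sublist_replicate x).mpr (by omega))) (List.Sublist.refl q)

lemma extension {A u v : List Bool} {k : ℕ} (hA : ∀ c : Bool, c ∈ A)
    (h : SimonCongr k u v) : SimonCongr (k + 1) (A ++ u) (A ++ v) := by
  have key : ∀ u' v' : List Bool, (∀ s : List Bool, s.length ≤ k → s <+ u' → s <+ v') →
      ∀ s : List Bool, s.length ≤ k + 1 → s <+ A ++ u' → s <+ A ++ v' := by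
    intro u' v' huv s hs hsub
    obtain ⟨s₁, s₂, rfl, h1, h2⟩ := List.sublist_append_iff.mp hsub
    by_cases hlen : s₂.length ≤ k
    · exact List.Sublist.append h1 (huv s₂ hlen h2)
    · have hs₁ : s₁ = [] := by
        simp at hs
        rw [← List.length_eq_zero_iff]
        omega
      subst hs₁
      simp only [List.nil_append] at *
      cases s₂ with
      | nil => simp
      | cons c s' =>
        have hs' : s' <+ v' := huv s' (by simp at hs; omega) ((List.sublist_cons_self c s').trans h2)
        have : [c] ++ s' <+ A ++ v' :=
          List.Sublist.append (List.singleton_sublist.mpr (hA c)) hs'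
        simpa using this
  intro s hs
  constructor
  · exact key u v (fun s hs h' => (h s hs).mp h') s hs
  · exact key v u (fun s hs h' => (h s hs).mpr h') s hs

/-! ### The normal form -/

/-- Normal form with fuel. -/
def nfAux : ℕ → ℕ → List Bool → List Bool
  | 0, _, _ => []
  | fuel+1, k, w =>
    match w with
    | [] => []
    | c :: t =>
      match (c :: t).dropWhile (· = c) with
      | [] => (c :: t).take k
      | y :: w₂ =>
        let P := ((c :: t).takeWhile (· = c)).length
        let m := archNum (c :: t)
        let cap := if archNum (y :: w₂) = m then k - m else k - m + 1
        replicate (min P cap) c ++ y :: nfAux fuel (k - 1) w₂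

/-- The normal form of a binary word for `∼ₖ`. -/
def nf (k : ℕ) (w : List Bool) : List Bool := nfAux w.length k w

lemma dropWhile_shrink (c : Bool) (t : List Bool) {y : Bool} {w₂ : List Bool}
    (h : (c :: t).dropWhile (· = c) = y :: w₂) : w₂.length < t.length + 1 := by
  have h1 : (c :: t).dropWhile (· = c) = t.dropWhile (· = c) := by
    rw [dropWhile_cons]
    simp
  have h2 : (t.dropWhile (· = c)).length ≤ t.length := by
    have := List.dropWhile_sublist (l := t) (p := (· = c))
    exact this.length_le
  rw [h1] at h
  have := congrArg List.length h
  simp at this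
  omega

/-- Fuel irrelevance. -/
lemma nfAux_fuel : ∀ (f1 : ℕ) (k : ℕ) (w : List Bool) (f2 : ℕ),
    w.length ≤ f1 → w.length ≤ f2 → nfAux f1 k w = nfAux f2 k w := by
  intro f1
  induction f1 with
  | zero =>
    intro k w f2 h1 _
    have : w = [] := by
      cases w with
      | nil => rfl
      | cons a b => simp at h1
    subst this
    cases f2 <;> rfl
  | succ f ih =>
    intro k w f2 h1 h2
    cases w with
    | nil => cases f2 <;> rfl
    | cons c t =>
      cases f2 with
      | zero => simp at h2
      | succ f2' =>
        show nfAux (f+1) k (c :: t) = nfAux (f2'+1) k (c :: t)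
        rw [nfAux, nfAux]
        cases hd : (c :: t).dropWhile (· = c) with
        | nil => rfl
        | cons y w₂ =>
          have hlt := dropWhile_shrink c t hd
          simp only []
          rw [ih (k-1) w₂ f2' (by simp at h1; omega) (by simp at h2; omega)]

@[simp] lemma nf_nil (k : ℕ) : nf k [] = [] := rfl

lemma dropWhile_replicate (x : Bool) (p : ℕ) :
    (replicate p x).dropWhile (· = x) = [] := by
  induction p with
  | zero => rfl
  | succ n ih => rw [replicate_succ, dropWhile_cons]; simpa using ih

lemma nf_replicate (k : ℕ) {x : Bool} {p : ℕ} (hp : 1 ≤ p) :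
    nf k (replicate p x) = (replicate p x).take k := by
  obtain ⟨q, rfl⟩ := Nat.exists_eq_add_of_le hp
  rw [add_comm]
  rw [nf]
  have hlen : (replicate (q+1) x).length = q + 1 := by simp
  rw [hlen, replicate_succ, nfAux]
  have hd : (x :: replicate q x).dropWhile (· = x) = [] := by
    rw [← replicate_succ]
    exact dropWhile_replicate x (q+1)
  rw [hd]

/-- Main unfolding lemma for the normal form. -/
lemma nf_arch (k : ℕ) {x : Bool} {P : ℕ} (hP : 1 ≤ P) (w₂ : List Bool) :
    nf k (replicate P x ++ (!x) :: w₂) =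
      replicate (min P (if archNum ((!x) :: w₂) = archNum (replicate P x ++ (!x) :: w₂)
          then k - archNum (replicate P x ++ (!x) :: w₂)
          else k - archNum (replicate P x ++ (!x) :: w₂) + 1)) x
        ++ (!x) :: nf (k - 1) w₂ := by
  set w := replicate P x ++ (!x) :: w₂ with hw
  obtain ⟨q, hq⟩ := Nat.exists_eq_add_of_le hP
  have hw' : w = x :: (replicate q x ++ (!x) :: w₂) := by
    rw [hw, hq, add_comm, replicate_succ, cons_append]
  have hlen : w.length = (replicate q x ++ (!x) :: w₂).length + 1 := by
    rw [hw']; simp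
  rw [nf, hlen, hw', nfAux]
  have hdrop : (x :: (replicate q x ++ (!x) :: w₂)).dropWhile (· = x) = (!x) :: w₂ := by
    have := (takeWhile_rep_block (x := x) P w₂).2
    rw [hq, add_comm, replicate_succ, cons_append] at this
    exact this
  have htake : ((x :: (replicate q x ++ (!x) :: w₂)).takeWhile (· = x)).length = P := by
    have := (takeWhile_rep_block (x := x) P w₂).1
    rw [hq, add_comm, replicate_succ, cons_append] at this
    rw [this]
    simp
    omega
  rw [hdrop]
  simp only [htake]
  rw [← hw']
  have : nfAux (replicate q x ++ (!x) :: w₂).length (k-1) w₂ = nf (k-1) w₂ := by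
    rw [nf]
    exact nfAux_fuel _ _ _ _ (by simp; omega) le_rfl
  rw [this]

/-! ### Soundness -/

lemma take_replicate' (k p : ℕ) (x : Bool) :
    (replicate p x).take k = replicate (min p k) x := by
  rw [List.take_replicate, Nat.min_comm]

/-- archNum of nf is preserved in the regime. -/
lemma archNum_nf : ∀ (n : ℕ) (w : List Bool), w.length ≤ n → ∀ k, archNum w < k →
    archNum (nf k w) = archNum w := by
  intro n
  induction n with
  | zero =>
    intro w hw k _
    have : w = [] := by cases w with | nil => rfl | cons a b => simp at hw
    subst this; simp
  | succ n ih =>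
    intro w hw k hk
    rcases block_cases w with rfl | ⟨x, p, hp, rfl⟩ | ⟨x, p, w₂, hp, rfl⟩
    · simp
    · rw [nf_replicate k hp, take_replicate', archNum_replicate, archNum_replicate]
    · rw [nf_arch k hp w₂]
      have hm : archNum (replicate p x ++ (!x) :: w₂) = 1 + archNum w₂ := archNum_arch hp w₂
      set m := archNum (replicate p x ++ (!x) :: w₂) with hmdef
      have hcap : 1 ≤ (if archNum ((!x) :: w₂) = m then k - m else k - m + 1) := by
        split <;> omega
      have hmin : 1 ≤ min p (if archNum ((!x) :: w₂) = m then k - m else k - m + 1) := by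
        omega
      rw [archNum_arch hmin]
      have hlw2 : w₂.length ≤ n := by
        have : (replicate p x ++ (!x) :: w₂).length = p + 1 + w₂.length := by simp; omega
        omega
      rw [ih w₂ hlw2 (k-1) (by omega), hm]

/-- Iterated reduction of an initial block down to a cap. -/
lemma reduce_to_cap {q : List Bool} {x : Bool} {C k : ℕ} (hC : 1 ≤ C)
    (hcond : k + 1 ≤ C + 1 + archNum q) :
    ∀ P, SimonCongr k (replicate P x ++ q) (replicate (min P C) x ++ q) := by
  intro P
  induction P with
  | zero => simp [simonRefl]
  | succ P ihP =>
    by_cases hPC : P + 1 ≤ C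
    · rw [min_eq_left hPC]; exact simonRefl _ _
    · have h1 : SimonCongr k (replicate (P+1) x ++ q) (replicate P x ++ q) := by
        have := reduction (p := ([] : List Bool)) (q := q) (x := x) (n := P + 1) (k := k)
          (by omega) (by simp [archNum_nil]; omega)
        simpa using this
      have h2 : min (P+1) C = min P C := by omega
      rw [h2]
      exact simonTrans h1 ihP

/-- Two-sided arch equality for congruent words (allowing boundary). -/
lemma arch_eq_transfer'' {j : ℕ} {a b : List Bool} (h : SimonCongr j a b)
    (ha : archNum a ≤ j) (hb : archNum b ≤ j) : archNum a = archNum b := by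
  rcases Nat.lt_or_ge (archNum a) j with h1 | h1
  · have h2 := arch_le_transfer h h1
    rcases Nat.lt_or_ge (archNum b) j with h3 | h3
    · have h4 := arch_le_transfer (simonSymm h) h3
      omega
    · omega
  · rcases Nat.lt_or_ge (archNum b) j with h3 | h3
    · have h4 := arch_le_transfer (simonSymm h) h3
      omega
    · omega

/-- Soundness: every word is congruent to its normal form. -/
lemma nf_sound : ∀ (n : ℕ) (w : List Bool), w.length ≤ n → ∀ k, archNum w < k →
    SimonCongr k w (nf k w) := by
  intro n
  induction n with
  | zero =>
    intro w hw k _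
    have : w = [] := by cases w with | nil => rfl | cons a b => simp at hw
    subst this; simp [simonRefl]
  | succ n ih =>
    intro w hw k hk
    rcases block_cases w with rfl | ⟨x, p, hp, rfl⟩ | ⟨x, p, w₂, hp, rfl⟩
    · simp [simonRefl]
    · rw [nf_replicate k hp, take_replicate']
      by_cases hpk : p ≤ k
      · rw [min_eq_left hpk]; exact simonRefl _ _
      · rw [min_eq_right (by omega)]
        have key : ∀ d, SimonCongr k (replicate (k + d) x) (replicate k x) := by
          intro d
          induction d with
          | zero => simpa using simonRefl k (replicate k x)
          | succ d ihd =>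
            have h1 : SimonCongr k (replicate (k + (d+1)) x) (replicate (k + d) x) := by
              have := reduction (p := ([] : List Bool)) (q := ([] : List Bool)) (x := x)
                (n := k + d + 1) (k := k) (by omega) (by simp only [archNum_nil]; omega)
              simp only [nil_append, append_nil] at this
              have he : k + (d + 1) = k + d + 1 := by omega
              rw [he]
              simpa using this
            exact simonTrans h1 ihd
        have := key (p - k)
        rw [show k + (p - k) = p from by omega] at this
        exact this
    · -- arch case
      have hm : archNum (replicate p x ++ (!x) :: w₂) = 1 + archNum w₂ := archNum_arch hp w₂
      set m := archNum (replicate p x ++ (!x) :: w₂) with hmdef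
      have hlw2 : w₂.length ≤ n := by
        have : (replicate p x ++ (!x) :: w₂).length = p + 1 + w₂.length := by simp; omega
        omega
      have hw₂ : SimonCongr (k-1) w₂ (nf (k-1) w₂) := ih w₂ hlw2 (k-1) (by omega)
      -- extension
      have hA : ∀ c : Bool, c ∈ replicate p x ++ [!x] := by
        intro c
        by_cases hc : c = x
        · subst hc
          apply List.mem_append_left
          exact List.mem_replicate.mpr ⟨by omega, rfl⟩
        · have : c = !x := bool_ne_iff.mp hc
          subst this
          apply List.mem_append_right
          simp
      have hext := extension (A := replicate p x ++ [!x]) hA hw₂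
      rw [show k - 1 + 1 = k from by omega] at hext
      have hassoc : ∀ z : List Bool, (replicate p x ++ [!x]) ++ z = replicate p x ++ (!x) :: z := by
        intro z
        rw [append_assoc]
        rfl
      rw [hassoc, hassoc] at hext
      -- arch count stability of (!x) :: nf (k-1) w₂
      have harch_nf : archNum (nf (k-1) w₂) = archNum w₂ :=
        archNum_nf n w₂ hlw2 (k-1) (by omega)
      have hstab : archNum ((!x) :: nf (k-1) w₂) = archNum ((!x) :: w₂) := by
        have hcong : SimonCongr (k-1) ((!x) :: w₂) ((!x) :: nf (k-1) w₂) := by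
          have := congr_prepend [!x] hw₂
          simpa using this
        have hb1 : archNum ((!x) :: w₂) ≤ k - 1 := by
          have := archNum_cons_le (!x) w₂
          omega
        have hb2 : archNum ((!x) :: nf (k-1) w₂) ≤ k - 1 := by
          have := archNum_cons_le (!x) (nf (k-1) w₂)
          omega
        exact (arch_eq_transfer'' hcong hb1 hb2).symm
      -- reduce the initial block
      set C := (if archNum ((!x) :: w₂) = m then k - m else k - m + 1) with hC
      have hCpos : 1 ≤ C := by rw [hC]; split <;> omega
      have harchq : C + archNum ((!x) :: nf (k-1) w₂) = k := by
        rw [hstab, hC]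
        have h1 := archNum_cons_le (!x) w₂
        have h2 := le_archNum_cons (!x) w₂
        split <;> omega
      have hred := reduce_to_cap (q := (!x) :: nf (k-1) w₂) (x := x) (C := C) (k := k)
        hCpos (by omega) p
      rw [nf_arch k hp w₂, ← hC]
      exact simonTrans hext hred


/-! ### Completeness -/

lemma peel_y {x : Bool} {P : ℕ} (hP : 1 ≤ P) (w₂ s : List Bool) :
    (!x) :: s <+ replicate P x ++ (!x) :: w₂ ↔ s <+ w₂ := by
  constructor
  · intro h
    exact List.cons_sublist_cons.mp (skip_block (by simp) h)
  · intro h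
    exact sublist_append_left' _ (List.cons_sublist_cons.mpr h)

lemma peel_x {x : Bool} {P : ℕ} (hP : 1 ≤ P) (w₂ s : List Bool) :
    x :: s <+ replicate P x ++ (!x) :: w₂ ↔ s <+ replicate (P-1) x ++ (!x) :: w₂ := by
  have hrep : replicate P x = x :: replicate (P-1) x := by
    rw [← replicate_succ]
    congr 1
    omega
  rw [hrep, cons_append, List.cons_sublist_cons]

lemma empty_congr {k : ℕ} {v : List Bool} (hk : 1 ≤ k) (h : SimonCongr k [] v) : v = [] := by
  cases v with
  | nil => rfl
  | cons c t =>
    exfalso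
    have hct : [c] <+ c :: t := List.singleton_sublist.mpr (by simp)
    have := (h [c] (by simp; omega)).mpr hct
    simp at this

/-- Completeness: congruent words in the regime have equal normal forms. -/
lemma nf_complete : ∀ (n : ℕ) (u : List Bool), u.length ≤ n → ∀ (v : List Bool) (k : ℕ),
    archNum u < k → archNum v < k → SimonCongr k u v → nf k u = nf k v := by
  intro n
  induction n with
  | zero =>
    intro u hu v k hku hkv h
    have hun : u = [] := by cases u with | nil => rfl | cons a b => simp at hu
    subst hun
    rw [empty_congr (by omega) h]
  | succ n ih =>
    intro u hu v k hku hkv h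
    have hmv : archNum v = archNum u := arch_eq_transfer h hku
    rcases block_cases u with rfl | ⟨x, p, hp, rfl⟩ | ⟨x, P, u₂, hP, rfl⟩
    · rw [empty_congr (by omega) h]
    · -- u is a single block
      rcases block_cases v with rfl | ⟨z, q, hq, rfl⟩ | ⟨z, Q, v₂, hQ, rfl⟩
      · exfalso
        have hx : [x] <+ replicate p x := List.singleton_sublist.mpr
          (List.mem_replicate.mpr ⟨by omega, rfl⟩)
        have := (h [x] (by simp; omega)).mp hx
        simp at this
      · -- both single blocks
        have hxz : x = z := by
          have hx : [x] <+ replicate p x := List.singleton_sublist.mpr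
            (List.mem_replicate.mpr ⟨by omega, rfl⟩)
          have := (h [x] (by simp; omega)).mp hx
          exact List.eq_of_mem_replicate (List.singleton_sublist.mp this)
        subst hxz
        have key : ∀ (p' q' : ℕ), 1 ≤ p' → 1 ≤ q' →
            SimonCongr k (replicate p' x) (replicate q' x) → min p' k ≤ min q' k := by
          intro p' q' hp' hq' hcong
          by_contra hlt
          push_neg at hlt
          have hqk : min q' k < k := lt_of_lt_of_le hlt (min_le_right p' k)
          have hqq : min q' k = q' := by
            rcases Nat.le_total q' k with h' | h'
            · rw [min_eq_left h']
            · rw [min_eq_right h'] at hqk ⊢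
              omega
          have hs : replicate (q' + 1) x <+ replicate p' x :=
            (List.replicate_sublist_replicate x).mpr
              (by have := min_le_left p' k; omega)
          have := (hcong (replicate (q' + 1) x) (by simp; omega)).mp hs
          have := (List.replicate_sublist_replicate x).mp this
          omega
        have hmin : min p k = min q k :=
          le_antisymm (key p q hp hq h) (key q p hq hp (simonSymm h))
        rw [nf_replicate k hp, nf_replicate k hq, take_replicate', take_replicate', hmin]
      · exfalso
        rw [archNum_arch hQ, archNum_replicate] at hmv
        omega
    · -- u has an arch
      have hmu : archNum (replicate P x ++ (!x) :: u₂) = 1 + archNum u₂ := archNum_arch hP u₂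
      set m := archNum (replicate P x ++ (!x) :: u₂) with hmdef
      have hm1 : 1 ≤ m := by omega
      rcases block_cases v with rfl | ⟨z, q, hq, rfl⟩ | ⟨z, Q, v₂, hQ, rfl⟩
      · exfalso; simp at hmv; omega
      · exfalso; rw [archNum_replicate] at hmv; omega
      · -- both have arches; equal head letters
        have hxz : x = z := by
          by_contra hne
          have hzx : z = !x := by cases x <;> cases z <;> simp_all
          subst hzx
          have hnn : (!(!x)) = x := Bool.not_not x
          rw [hnn] at h
          have D1 : SimonCongr (k-1) u₂ (replicate (Q-1) (!x) ++ x :: v₂) := by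
            intro s hs
            have h1 := peel_y (x := x) hP u₂ s
            have h2 := peel_x (x := !x) hQ v₂ s
            rw [hnn] at h2
            exact h1.symm.trans ((h ((!x) :: s) (by simp; omega)).trans h2)
          have D2 : SimonCongr (k-1) v₂ (replicate (P-1) x ++ (!x) :: u₂) := by
            intro s hs
            have h1 := peel_y (x := !x) hQ v₂ s
            rw [hnn] at h1
            have h2 := peel_x (x := x) hP u₂ s
            exact h1.symm.trans (((simonSymm h) (x :: s) (by simp; omega)).trans h2)
          have E := congr_prepend (replicate (Q-1) (!x) ++ [x]) D2
          have hL : (replicate (Q-1) (!x) ++ [x]) ++ v₂ = replicate (Q-1) (!x) ++ x :: v₂ := by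
            rw [append_assoc]; rfl
          have hR : (replicate (Q-1) (!x) ++ [x]) ++ (replicate (P-1) x ++ (!x) :: u₂) =
              replicate (Q-1) (!x) ++ (replicate P x ++ (!x) :: u₂) := by
            rw [append_assoc]
            congr 1
            rw [← append_assoc]
            congr 1
            rw [singleton_append, ← replicate_succ]
            congr 1
            omega
          rw [hL, hR] at E
          have hchain : SimonCongr (k-1) u₂
              (replicate (Q-1) (!x) ++ (replicate P x ++ (!x) :: u₂)) := simonTrans D1 E
          have hZarch : m ≤ archNum (replicate (Q-1) (!x) ++ (replicate P x ++ (!x) :: u₂)) := by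
            rw [hmdef]
            exact archNum_mono (List.sublist_append_right _ _)
          obtain ⟨t, htl, ht⟩ := exists_nonsublist (w := u₂) (j := m) (by omega)
          have htZ : t <+ replicate (Q-1) (!x) ++ (replicate P x ++ (!x) :: u₂) :=
            universal_sublist t _ (by omega)
          exact ht ((hchain t (by omega)).mpr htZ)
        subst hxz
        -- peel the common structure
        have hmu₂ : archNum u₂ = m - 1 := by omega
        have hmv₂ : archNum v₂ = m - 1 := by
          have := archNum_arch (x := x) hQ v₂
          omega
        have hsub : SimonCongr (k-1) u₂ v₂ := by
          intro s hs
          exact (peel_y hP u₂ s).symm.trans ((h ((!x) :: s) (by simp; omega)).trans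
            (peel_y hQ v₂ s))
        have hlu₂ : u₂.length ≤ n := by
          have : (replicate P x ++ (!x) :: u₂).length = P + 1 + u₂.length := by simp; omega
          omega
        have hnf₂ : nf (k-1) u₂ = nf (k-1) v₂ :=
          ih u₂ hlu₂ v₂ (k-1) (by omega) (by omega) hsub
        -- equal beta types
        have hT : archNum ((!x) :: u₂) = archNum ((!x) :: v₂) := by
          have hcong : SimonCongr (k-1) ((!x) :: u₂) ((!x) :: v₂) := by
            have := congr_prepend [!x] hsub
            simpa using this
          have hb1 : archNum ((!x) :: u₂) ≤ k - 1 := by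
            have := archNum_cons_le (!x) u₂
            omega
          have hb2 : archNum ((!x) :: v₂) ≤ k - 1 := by
            have := archNum_cons_le (!x) v₂
            omega
          exact arch_eq_transfer'' hcong hb1 hb2
        -- equal capped block lengths
        set a := archNum ((!x) :: u₂) with ha
        have hav : archNum ((!x) :: v₂) = a := hT.symm
        set C := (if a = m then k - m else k - m + 1) with hCdef
        have haround : a = m - 1 ∨ a = m := by
          have h1 := archNum_cons_le (!x) u₂
          have h2 := le_archNum_cons (!x) u₂
          omega
        have hCa : C + a = k := by
          rcases haround with h' | h'
          · rw [hCdef, if_neg (by omega)]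
            omega
          · rw [hCdef, if_pos h']
            omega
        have key : ∀ (P' Q' : ℕ) (u₂' v₂' : List Bool), 1 ≤ P' → 1 ≤ Q' →
            archNum ((!x) :: u₂') = a → archNum ((!x) :: v₂') = a →
            SimonCongr k (replicate P' x ++ (!x) :: u₂') (replicate Q' x ++ (!x) :: v₂') →
            min P' C < min Q' C → False := by
          intro P' Q' u₂' v₂' hP' hQ' hau' hav' hcong hlt
          have hPC : min P' C < C := lt_of_lt_of_le hlt (min_le_right Q' C)
          have hPP : min P' C = P' := by
            rcases Nat.le_total P' C with h' | h'
            · rw [min_eq_left h']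
            · rw [min_eq_right h'] at hPC ⊢
              omega
          have hPQ : P' + 1 ≤ Q' := by
            have := min_le_left Q' C
            omega
          obtain ⟨ρ, hρl, hρ⟩ := bad_word ((!x) :: u₂').length ((!x) :: u₂') le_rfl x (by simp)
          have hslen : (replicate (P' + 1) x ++ ρ).length ≤ k := by
            simp [hρl, hau']
            omega
          have hsv : replicate (P' + 1) x ++ ρ <+ replicate Q' x ++ (!x) :: v₂' :=
            List.Sublist.append ((List.replicate_sublist_replicate x).mpr hPQ)
              (universal_sublist ρ _ (by rw [hρl, hau', hav']))
          have hsu : replicate (P' + 1) x ++ ρ <+ replicate P' x ++ (!x) :: u₂' := by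
            exact (hcong _ hslen).mpr hsv
          have heq : replicate (P' + 1) x ++ ρ = replicate P' x ++ (x :: ρ) := by
            rw [show (x :: ρ) = [x] ++ ρ from rfl, ← append_assoc, ← replicate_succ']
          rw [heq] at hsu
          exact hρ (rep_cancel hsu)
        have hminPQ : min P C = min Q C := by
          have k1 := key P Q u₂ v₂ hP hQ rfl hav h
          have k2 := key Q P v₂ u₂ hQ hP hav rfl (simonSymm h)
          rcases Nat.lt_trichotomy (min P C) (min Q C) with h' | h' | h'
          · exact absurd h' (fun hh => k1 hh)
          · exact h'
          · exact absurd h' (fun hh => k2 hh)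
        -- assemble
        rw [nf_arch k hP u₂, nf_arch k hQ v₂]
        rw [← ha, hav, hmv, ← hCdef, hminPQ, hnf₂]

/-! ### Counting normal forms -/

/-- Does prepending `!x` to `u₂` create a new arch? -/
def TF (x : Bool) (u₂ : List Bool) : Prop := archNum ((!x) :: u₂) = archNum u₂ + 1

instance (x : Bool) (u₂ : List Bool) : Decidable (TF x u₂) := by
  unfold TF; infer_instance

/-- Normal forms with a side-state first block. -/
def sideF (c : ℕ) (x : Bool) (u₂ : List Bool) : Finset (List Bool) :=
  (Finset.Icc (if TF x u₂ then 1 else 2) (if TF x u₂ then c else c + 1)).image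
    (fun P => replicate P x ++ (!x) :: u₂)

/-- Normal forms with a middle-state first block. -/
def midF (x : Bool) (u₂ : List Bool) : Finset (List Bool) :=
  if TF x u₂ then ∅ else {x :: (!x) :: u₂}

/-- The finsets of normal forms with `M` arches (level `k = c + M`), by state. -/
def NF (c : ℕ) : ℕ → Fin 3 → Finset (List Bool)
  | 0, i =>
    if i = 0 then (Finset.Icc 1 c).image (fun p => replicate p false)
    else if i = 1 then {[]}
    else (Finset.Icc 1 c).image (fun p => replicate p true)
  | M+1, i =>
    let tot := NF c M 0 ∪ NF c M 1 ∪ NF c M 2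
    if i = 0 then tot.biUnion (sideF c false)
    else if i = 1 then tot.biUnion (fun u₂ => midF false u₂ ∪ midF true u₂)
    else tot.biUnion (sideF c true)

lemma fin3_cases : ∀ i : Fin 3, i = 0 ∨ i = 1 ∨ i = 2 := by decide

/-- Membership in a level-(M+1) set in unified form. -/
lemma mem_NF_succ {c M : ℕ} {i : Fin 3} {u : List Bool} :
    u ∈ NF c (M+1) i ↔ ∃ u₂ ∈ NF c M 0 ∪ NF c M 1 ∪ NF c M 2, ∃ x : Bool, ∃ P,
      1 ≤ P ∧ u = replicate P x ++ (!x) :: u₂ ∧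
      ((i = 0 ∧ x = false ∧ (if TF x u₂ then 1 else 2) ≤ P ∧ P ≤ (if TF x u₂ then c else c + 1)) ∨
       (i = 2 ∧ x = true ∧ (if TF x u₂ then 1 else 2) ≤ P ∧ P ≤ (if TF x u₂ then c else c + 1)) ∨
       (i = 1 ∧ P = 1 ∧ ¬ TF x u₂)) := by
  rcases fin3_cases i with rfl | rfl | rfl
  · rw [show (NF c (M+1) 0) = (NF c M 0 ∪ NF c M 1 ∪ NF c M 2).biUnion (sideF c false) from rfl]
    simp only [Finset.mem_biUnion, sideF, Finset.mem_image, Finset.mem_Icc]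
    constructor
    · rintro ⟨u₂, hu₂, P, ⟨h1, h2⟩, rfl⟩
      exact ⟨u₂, hu₂, false, P, by split at h1 <;> omega, rfl,
        Or.inl ⟨by trivial, rfl, h1, h2⟩⟩
    · rintro ⟨u₂, hu₂, x, P, hP, rfl, h | h | h⟩
      · obtain ⟨_, rfl, h1, h2⟩ := h
        exact ⟨u₂, hu₂, P, ⟨h1, h2⟩, rfl⟩
      · exact absurd h.1 (by decide)
      · exact absurd h.1 (by decide)
  · rw [show (NF c (M+1) 1) = (NF c M 0 ∪ NF c M 1 ∪ NF c M 2).biUnion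
      (fun u₂ => midF false u₂ ∪ midF true u₂) from rfl]
    simp only [Finset.mem_biUnion, Finset.mem_union]
    constructor
    · rintro ⟨u₂, hu₂, hmem | hmem⟩
      · rw [midF] at hmem
        split at hmem
        · simp at hmem
        · simp at hmem
          exact ⟨u₂, hu₂, false, 1, le_rfl, by simpa using hmem,
            Or.inr (Or.inr ⟨by trivial, rfl, by assumption⟩)⟩
      · rw [midF] at hmem
        split at hmem
        · simp at hmem
        · simp at hmem
          exact ⟨u₂, hu₂, true, 1, le_rfl, by simpa using hmem,
            Or.inr (Or.inr ⟨by trivial, rfl, by assumption⟩)⟩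
    · rintro ⟨u₂, hu₂, x, P, hP, rfl, h | h | h⟩
      · exact absurd h.1 (by decide)
      · exact absurd h.1 (by decide)
      · obtain ⟨_, rfl, hT⟩ := h
        refine ⟨u₂, hu₂, ?_⟩
        cases x
        · left; rw [midF, if_neg hT]; simp
        · right; rw [midF, if_neg hT]; simp
  · rw [show (NF c (M+1) 2) = (NF c M 0 ∪ NF c M 1 ∪ NF c M 2).biUnion (sideF c true) from rfl]
    simp only [Finset.mem_biUnion, sideF, Finset.mem_image, Finset.mem_Icc]
    constructor
    · rintro ⟨u₂, hu₂, P, ⟨h1, h2⟩, rfl⟩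
      exact ⟨u₂, hu₂, true, P, by split at h1 <;> omega, rfl,
        Or.inr (Or.inl ⟨by trivial, rfl, h1, h2⟩)⟩
    · rintro ⟨u₂, hu₂, x, P, hP, rfl, h | h | h⟩
      · exact absurd h.1 (by decide)
      · obtain ⟨_, rfl, h1, h2⟩ := h
        exact ⟨u₂, hu₂, P, ⟨h1, h2⟩, rfl⟩
      · exact absurd h.1 (by decide)

/-- All members of level M sets have `M` arches. -/
lemma NF_arch {c : ℕ} : ∀ (M : ℕ) (i : Fin 3) (u : List Bool), u ∈ NF c M i → archNum u = M := by
  intro M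
  induction M with
  | zero =>
    intro i u hu
    rcases fin3_cases i with rfl | rfl | rfl
    · simp [NF] at hu
      obtain ⟨p, -, rfl⟩ := hu
      exact archNum_replicate _ _
    · simp [NF] at hu
      subst hu; rfl
    · simp [NF] at hu
      obtain ⟨p, -, rfl⟩ := hu
      exact archNum_replicate _ _
  | succ M ih =>
    intro i u hu
    obtain ⟨u₂, hu₂, x, P, hP, rfl, _⟩ := mem_NF_succ.mp hu
    rw [archNum_arch hP]
    have : archNum u₂ = M := by
      simp only [Finset.mem_union] at hu₂
      rcases hu₂ with (h | h) | h
      · exact ih 0 u₂ h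
      · exact ih 1 u₂ h
      · exact ih 2 u₂ h
    omega

lemma cons_rep_append (x : Bool) (P : ℕ) (w : List Bool) :
    x :: (replicate P x ++ w) = replicate (P+1) x ++ w := by
  rw [replicate_succ, cons_append]

/-- Arch counts after prepending a letter, for members of the state classes. -/
lemma NF_state {c : ℕ} : ∀ (M : ℕ) (i : Fin 3) (u : List Bool), u ∈ NF c M i →
    archNum (false :: u) = M + (if i = 2 then 1 else 0) ∧
    archNum (true :: u) = M + (if i = 0 then 1 else 0) := by
  intro M
  cases M with
  | zero =>
    intro i u hu
    rcases fin3_cases i with rfl | rfl | rfl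
    · simp only [NF] at hu
      simp at hu
      obtain ⟨p, hp, rfl⟩ := hu
      constructor
      · rw [← replicate_succ, archNum_replicate]
        simp
      · have hrw : replicate p false = false :: replicate (p-1) false := by
          rw [← replicate_succ]
          congr 1
          omega
        rw [hrw, show (true : Bool) :: false :: replicate (p-1) false =
          replicate 1 true ++ (!true) :: replicate (p-1) false from rfl,
          archNum_arch le_rfl, archNum_replicate]
        simp
    · simp [NF] at hu
      subst hu
      constructor
      · rw [show [false] = replicate 1 false from rfl, archNum_replicate]
        simp
      · rw [show [true] = replicate 1 true from rfl, archNum_replicate]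
        simp
    · simp [NF] at hu
      obtain ⟨p, hp, rfl⟩ := hu
      constructor
      · have hrw : replicate p true = true :: replicate (p-1) true := by
          rw [← replicate_succ]
          congr 1
          omega
        rw [hrw, show (false : Bool) :: true :: replicate (p-1) true =
          replicate 1 false ++ (!false) :: replicate (p-1) true from rfl,
          archNum_arch le_rfl, archNum_replicate]
        simp
      · rw [show (true : Bool) :: replicate p true = replicate (p+1) true from by
          rw [replicate_succ], archNum_replicate]
        simp
  | succ M =>
    intro i u hu
    obtain ⟨u₂, hu₂, x, P, hP, rfl, hcond⟩ := mem_NF_succ.mp hu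
    have hau₂ : archNum u₂ = M := by
      simp only [Finset.mem_union] at hu₂
      rcases hu₂ with (h | h) | h
      exacts [NF_arch M 0 u₂ h, NF_arch M 1 u₂ h, NF_arch M 2 u₂ h]
    -- same-letter prepend
    have hsame : archNum (x :: (replicate P x ++ (!x) :: u₂)) = M + 1 := by
      rw [cons_rep_append, archNum_arch (by omega), hau₂]
      omega
    -- other-letter prepend
    have hW : archNum ((!x) :: (replicate P x ++ (!x) :: u₂)) =
        1 + archNum (replicate (P-1) x ++ (!x) :: u₂) := by
      have hrw : replicate P x ++ (!x) :: u₂ = x :: (replicate (P-1) x ++ (!x) :: u₂) := by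
        rw [cons_rep_append]
        congr 2
        omega
      rw [hrw, show (!x) :: (x :: (replicate (P-1) x ++ (!x) :: u₂)) =
        replicate 1 (!x) ++ (!(!x)) :: (replicate (P-1) x ++ (!x) :: u₂) from by
          rw [Bool.not_not]; rfl,
        archNum_arch le_rfl]
    have harchu : archNum (replicate P x ++ (!x) :: u₂) = M + 1 := by
      rw [archNum_arch hP, hau₂]; omega
    rcases hcond with ⟨hi, hx, hlo, hhi⟩ | ⟨hi, hx, hlo, hhi⟩ | ⟨hi, hP1, hT⟩
    · -- i = 0, x = false
      subst hi hx
      have hother : archNum ((!false) :: (replicate P false ++ (!false) :: u₂)) = M + 2 := by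
        rw [hW]
        rcases Nat.lt_or_ge P 2 with hP2 | hP2
        · have hP1 : P = 1 := by omega
          subst hP1
          have hTF : TF false u₂ := by
            by_contra hT
            rw [if_neg hT] at hlo
            omega
          rw [show (1 : ℕ) - 1 = 0 from rfl]
          simp only [replicate_zero, nil_append]
          rw [TF] at hTF
          omega
        · rw [archNum_arch (by omega), hau₂]
          omega
      constructor
      · rw [show (false :: (replicate P false ++ (!false) :: u₂)) =
          (false :: (replicate P false ++ (!false) :: u₂)) from rfl, hsame]
        simp
      · have : (true : Bool) = !false := rfl
        rw [this, hother]
        simp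
    · -- i = 2, x = true
      subst hi hx
      have hother : archNum ((!true) :: (replicate P true ++ (!true) :: u₂)) = M + 2 := by
        rw [hW]
        rcases Nat.lt_or_ge P 2 with hP2 | hP2
        · have hP1 : P = 1 := by omega
          subst hP1
          have hTF : TF true u₂ := by
            by_contra hT
            rw [if_neg hT] at hlo
            omega
          rw [show (1 : ℕ) - 1 = 0 from rfl]
          simp only [replicate_zero, nil_append]
          rw [TF] at hTF
          omega
        · rw [archNum_arch (by omega), hau₂]
          omega
      constructor
      · have : (false : Bool) = !true := rfl
        rw [this, hother]
        simp
      · rw [hsame]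
        simp
    · -- i = 1, P = 1
      subst hi hP1
      have hother : archNum ((!x) :: (replicate 1 x ++ (!x) :: u₂)) = M + 1 := by
        rw [hW]
        rw [show (1 : ℕ) - 1 = 0 from rfl]
        simp only [replicate_zero, nil_append]
        rw [TF] at hT
        have h1 := le_archNum_cons (!x) u₂
        have h2 := archNum_cons_le (!x) u₂
        omega
      cases x
      · constructor
        · rw [hsame]; simp
        · rw [show (true : Bool) = !false from rfl, hother]; simp
      · constructor
        · rw [show (false : Bool) = !true from rfl, hother]; simp
        · rw [hsame]; simp

/-- Members of `NF` are normal forms. -/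
lemma NF_normal {c : ℕ} : ∀ (M : ℕ) (i : Fin 3) (u : List Bool), u ∈ NF c M i →
    nf (c + M) u = u := by
  intro M
  induction M with
  | zero =>
    intro i u hu
    rcases fin3_cases i with rfl | rfl | rfl
    · simp [NF] at hu
      obtain ⟨p, hp, rfl⟩ := hu
      rw [Nat.add_zero, nf_replicate _ hp.1, take_replicate', min_eq_left hp.2]
    · simp [NF] at hu
      subst hu
      simp
    · simp [NF] at hu
      obtain ⟨p, hp, rfl⟩ := hu
      rw [Nat.add_zero, nf_replicate _ hp.1, take_replicate', min_eq_left hp.2]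
  | succ M ih =>
    intro i u hu
    obtain ⟨u₂, hu₂, x, P, hP, rfl, hcond⟩ := mem_NF_succ.mp hu
    have hau₂ : archNum u₂ = M := by
      simp only [Finset.mem_union] at hu₂
      rcases hu₂ with (h | h) | h
      exacts [NF_arch M 0 u₂ h, NF_arch M 1 u₂ h, NF_arch M 2 u₂ h]
    have harchu : archNum (replicate P x ++ (!x) :: u₂) = M + 1 := by
      rw [archNum_arch hP, hau₂]; omega
    have hnf₂ : nf (c + M) u₂ = u₂ := by
      simp only [Finset.mem_union] at hu₂
      rcases hu₂ with (h | h) | h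
      exacts [ih 0 u₂ h, ih 1 u₂ h, ih 2 u₂ h]
    rw [nf_arch (c + (M+1)) hP u₂, harchu]
    have hk1 : c + (M + 1) - 1 = c + M := by omega
    have hkm : c + (M + 1) - (M + 1) = c := by omega
    rw [hk1, hkm, hnf₂]
    have hTiff : (archNum ((!x) :: u₂) = M + 1) ↔ TF x u₂ := by
      rw [TF, hau₂]
    congr 1
    -- remains: replicate (min P cap) x = replicate P x
    have hPC : P ≤ (if archNum ((!x) :: u₂) = M + 1 then c else c + 1) := by
      rcases hcond with ⟨_, _, _, hhi⟩ | ⟨_, _, _, hhi⟩ | ⟨_, hP1, hT⟩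
      · split
        · rename_i hcnd
          rw [if_pos (hTiff.mp hcnd)] at hhi
          exact hhi
        · rename_i hcnd
          rw [if_neg (fun ht => hcnd (hTiff.mpr ht))] at hhi
          exact hhi
      · split
        · rename_i hcnd
          rw [if_pos (hTiff.mp hcnd)] at hhi
          exact hhi
        · rename_i hcnd
          rw [if_neg (fun ht => hcnd (hTiff.mpr ht))] at hhi
          exact hhi
      · rw [if_neg (fun hc' => hT (hTiff.mp hc'))]
        omega
    rw [min_eq_left hPC]

/-- Conversely, every normal form lies in `NF`. -/
lemma NF_complete_set {c : ℕ} : ∀ (M : ℕ) (u : List Bool), archNum u = M →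
    nf (c + M) u = u → u ∈ NF c M 0 ∪ NF c M 1 ∪ NF c M 2 := by
  intro M
  induction M with
  | zero =>
    intro u ha hfix
    rcases block_cases u with rfl | ⟨x, p, hp, rfl⟩ | ⟨x, p, w₂, hp, rfl⟩
    · apply Finset.mem_union_left
      apply Finset.mem_union_right
      simp [NF]
    · rw [Nat.add_zero, nf_replicate _ hp, take_replicate'] at hfix
      have hlen : min p c = p := by
        have := congrArg List.length hfix
        simpa using this
      have hpc : p ≤ c := by
        have := min_le_right p c
        omega
      cases x
      · apply Finset.mem_union_left
        apply Finset.mem_union_left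
        rw [show NF c 0 0 = (Finset.Icc 1 c).image (fun p => replicate p false) from rfl,
          Finset.mem_image]
        exact ⟨p, Finset.mem_Icc.mpr ⟨hp, hpc⟩, rfl⟩
      · apply Finset.mem_union_right
        rw [show NF c 0 2 = (Finset.Icc 1 c).image (fun p => replicate p true) from rfl,
          Finset.mem_image]
        exact ⟨p, Finset.mem_Icc.mpr ⟨hp, hpc⟩, rfl⟩
    · rw [archNum_arch hp] at ha
      omega
  | succ M ih =>
    intro u ha hfix
    rcases block_cases u with rfl | ⟨x, p, hp, rfl⟩ | ⟨x, P, u₂, hP, rfl⟩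
    · simp at ha
    · rw [archNum_replicate] at ha
      omega
    · have hau₂ : archNum u₂ = M := by
        rw [archNum_arch hP] at ha
        omega
      rw [nf_arch (c + (M+1)) hP u₂, ha] at hfix
      have hk1 : c + (M + 1) - 1 = c + M := by omega
      have hkm : c + (M + 1) - (M + 1) = c := by omega
      rw [hk1, hkm] at hfix
      obtain ⟨hmin, hnf₂⟩ := block_repr_eq hfix
      have hu₂ : u₂ ∈ NF c M 0 ∪ NF c M 1 ∪ NF c M 2 := ih u₂ hau₂ hnf₂
      have hTiff : (archNum ((!x) :: u₂) = M + 1) ↔ TF x u₂ := by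
        rw [TF, hau₂]
      have hPC : P ≤ (if TF x u₂ then c else c + 1) := by
        have h1 : min P (if archNum ((!x) :: u₂) = M + 1 then c else c + 1) = P := hmin
        have h2 := min_le_right P (if archNum ((!x) :: u₂) = M + 1 then c else c + 1)
        by_cases hT : TF x u₂
        · rw [if_pos hT]
          rw [if_pos (hTiff.mpr hT)] at h1 h2
          omega
        · rw [if_neg hT]
          rw [if_neg (fun hc' => hT (hTiff.mp hc'))] at h1 h2
          omega
      by_cases hT : TF x u₂
      · -- side state
        cases x
        · apply Finset.mem_union_left
          apply Finset.mem_union_left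
          exact mem_NF_succ.mpr ⟨u₂, hu₂, false, P, hP, rfl,
            Or.inl ⟨rfl, rfl, by rw [if_pos hT]; omega, hPC⟩⟩
        · apply Finset.mem_union_right
          exact mem_NF_succ.mpr ⟨u₂, hu₂, true, P, hP, rfl,
            Or.inr (Or.inl ⟨rfl, rfl, by rw [if_pos hT]; omega, hPC⟩)⟩
      · rcases Nat.lt_or_ge P 2 with hP2 | hP2
        · -- middle state
          have hP1 : P = 1 := by omega
          apply Finset.mem_union_left
          apply Finset.mem_union_right
          exact mem_NF_succ.mpr ⟨u₂, hu₂, x, P, hP, rfl, Or.inr (Or.inr ⟨rfl, hP1, hT⟩)⟩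
        · -- side state, long block
          cases x
          · apply Finset.mem_union_left
            apply Finset.mem_union_left
            exact mem_NF_succ.mpr ⟨u₂, hu₂, false, P, hP, rfl,
              Or.inl ⟨rfl, rfl, by rw [if_neg hT]; omega, hPC⟩⟩
          · apply Finset.mem_union_right
            exact mem_NF_succ.mpr ⟨u₂, hu₂, true, P, hP, rfl,
              Or.inr (Or.inl ⟨rfl, rfl, by rw [if_neg hT]; omega, hPC⟩)⟩

/-- The three state classes are pairwise disjoint. -/
lemma NF_disj {c : ℕ} (M : ℕ) {i j : Fin 3} (hij : i ≠ j) :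
    Disjoint (NF c M i) (NF c M j) := by
  rw [Finset.disjoint_left]
  intro u hui huj
  have h1 := NF_state M i u hui
  have h2 := NF_state M j u huj
  apply hij
  rcases fin3_cases i with rfl | rfl | rfl <;> rcases fin3_cases j with rfl | rfl | rfl <;>
    simp at h1 h2 <;> omega

/-! ### Cardinalities -/

/-- The count vector. -/
def vnat (c : ℕ) : ℕ → Fin 3 → ℕ
  | 0 => ![c, 1, c]
  | M+1 => fun i =>
    if i = 0 then c * (vnat c M 0 + vnat c M 1 + vnat c M 2)
    else if i = 1 then vnat c M 0 + 2 * vnat c M 1 + vnat c M 2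
    else c * (vnat c M 0 + vnat c M 1 + vnat c M 2)

lemma rep_inj (x : Bool) : Function.Injective (fun p : ℕ => replicate p x) := by
  intro a b h
  simpa using congrArg List.length h

lemma sideF_card (c : ℕ) (x : Bool) (u₂ : List Bool) : (sideF c x u₂).card = c := by
  rw [sideF, Finset.card_image_of_injective _ (fun P Q h => (block_repr_eq h).1), Nat.card_Icc]
  split <;> omega

lemma sideF_mem {c : ℕ} {x : Bool} {u₂ u : List Bool} (h : u ∈ sideF c x u₂) :
    ∃ P, 1 ≤ P ∧ u = replicate P x ++ (!x) :: u₂ := by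
  rw [sideF, Finset.mem_image] at h
  obtain ⟨P, hP, rfl⟩ := h
  rw [Finset.mem_Icc] at hP
  exact ⟨P, by rcases hP with ⟨h1, _⟩; split at h1 <;> omega, rfl⟩

lemma midF_mem {x : Bool} {u₂ u : List Bool} (h : u ∈ midF x u₂) :
    u = x :: (!x) :: u₂ ∧ ¬ TF x u₂ := by
  rw [midF] at h
  split at h
  · simp at h
  · simp at h
    exact ⟨h, by assumption⟩

/-- Cardinalities of the state classes. -/
lemma NF_card {c : ℕ} : ∀ (M : ℕ) (i : Fin 3), (NF c M i).card = vnat c M i := by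
  intro M
  induction M with
  | zero =>
    intro i
    rcases fin3_cases i with rfl | rfl | rfl
    · rw [show NF c 0 0 = (Finset.Icc 1 c).image (fun p => replicate p false) from rfl,
        Finset.card_image_of_injective _ (rep_inj false), Nat.card_Icc]
      simp [vnat]
    · rw [show NF c 0 1 = {([] : List Bool)} from rfl]
      simp [vnat]
    · rw [show NF c 0 2 = (Finset.Icc 1 c).image (fun p => replicate p true) from rfl,
        Finset.card_image_of_injective _ (rep_inj true), Nat.card_Icc]
      simp [vnat]
  | succ M ih =>
    intro i
    have htotcard : (NF c M 0 ∪ NF c M 1 ∪ NF c M 2).card =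
        vnat c M 0 + vnat c M 1 + vnat c M 2 := by
      rw [Finset.card_union_of_disjoint, Finset.card_union_of_disjoint]
      · rw [ih 0, ih 1, ih 2]
      · exact NF_disj M (by decide)
      · rw [Finset.disjoint_union_left]
        exact ⟨NF_disj M (by decide), NF_disj M (by decide)⟩
    have hside : ∀ x : Bool,
        ((NF c M 0 ∪ NF c M 1 ∪ NF c M 2).biUnion (sideF c x)).card =
          c * (vnat c M 0 + vnat c M 1 + vnat c M 2) := by
      intro x
      rw [Finset.card_biUnion]
      · rw [Finset.sum_const_nat (m := c) (fun u₂ _ => sideF_card c x u₂), htotcard,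
          Nat.mul_comm]
      · intro u₂ _ v₂ _ hne
        simp only [Function.onFun]
        rw [Finset.disjoint_left]
        intro u hu hv
        obtain ⟨P, _, rfl⟩ := sideF_mem hu
        obtain ⟨Q, _, heq⟩ := sideF_mem hv
        exact hne (block_repr_eq heq).2
    rcases fin3_cases i with rfl | rfl | rfl
    · rw [show NF c (M+1) 0 = (NF c M 0 ∪ NF c M 1 ∪ NF c M 2).biUnion (sideF c false) from rfl,
        hside false]
      simp [vnat]
    · rw [show NF c (M+1) 1 = (NF c M 0 ∪ NF c M 1 ∪ NF c M 2).biUnion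
        (fun u₂ => midF false u₂ ∪ midF true u₂) from rfl]
      rw [Finset.card_biUnion]
      · have hcount : ∀ (j : Fin 3) (u₂ : List Bool), u₂ ∈ NF c M j →
            (midF false u₂ ∪ midF true u₂).card = (if j = 1 then 2 else 1) := by
          intro j u₂ hu₂
          have hst := NF_state M j u₂ hu₂
          have harch : archNum u₂ = M := NF_arch M j u₂ hu₂
          have hTf : TF false u₂ ↔ j = 0 := by
            rw [TF, show (!false) = true from rfl, harch, hst.2]
            rcases fin3_cases j with rfl | rfl | rfl <;> simp
          have hTt : TF true u₂ ↔ j = 2 := by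
            rw [TF, show (!true) = false from rfl, harch, hst.1]
            rcases fin3_cases j with rfl | rfl | rfl <;> simp
          have hdisj : Disjoint (midF false u₂) (midF true u₂) := by
            rw [Finset.disjoint_left]
            intro u hu hv
            have h1 := (midF_mem hu).1
            have h2 := (midF_mem hv).1
            rw [h1] at h2
            exact absurd (List.head_eq_of_cons_eq h2) (by decide)
          rw [Finset.card_union_of_disjoint hdisj]
          rw [midF, midF]
          rcases fin3_cases j with rfl | rfl | rfl
          · rw [if_pos (hTf.mpr rfl), if_neg (fun ht => by simpa using hTt.mp ht)]
            simp
          · rw [if_neg (fun ht => by simpa using hTf.mp ht),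
              if_neg (fun ht => by simpa using hTt.mp ht)]
            simp
          · rw [if_neg (fun ht => by simpa using hTf.mp ht), if_pos (hTt.mpr rfl)]
            simp
        rw [Finset.sum_union, Finset.sum_union,
          Finset.sum_const_nat (m := 1) (fun u₂ h => hcount 0 u₂ h),
          Finset.sum_const_nat (m := 2) (fun u₂ h => hcount 1 u₂ h),
          Finset.sum_const_nat (m := 1) (fun u₂ h => hcount 2 u₂ h),
          ih 0, ih 1, ih 2]
        · simp [vnat]
          ring
        · exact NF_disj M (by decide)
        · rw [Finset.disjoint_union_left]
          exact ⟨NF_disj M (by decide), NF_disj M (by decide)⟩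
      · intro u₂ _ v₂ _ hne
        simp only [Function.onFun]
        rw [Finset.disjoint_left]
        intro u hu hv
        rw [Finset.mem_union] at hu hv
        have h1 : ∃ x, u = x :: (!x) :: u₂ := by
          rcases hu with h | h
          exacts [⟨false, (midF_mem h).1⟩, ⟨true, (midF_mem h).1⟩]
        have h2 : ∃ y, u = y :: (!y) :: v₂ := by
          rcases hv with h | h
          exacts [⟨false, (midF_mem h).1⟩, ⟨true, (midF_mem h).1⟩]
        obtain ⟨x, rfl⟩ := h1
        obtain ⟨y, heq⟩ := h2
        apply hne
        have := List.tail_eq_of_cons_eq (List.tail_eq_of_cons_eq heq)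
        exact this ▸ rfl
    · rw [show NF c (M+1) 2 = (NF c M 0 ∪ NF c M 1 ∪ NF c M 2).biUnion (sideF c true) from rfl,
        hside true]
      simp [vnat]

/-! ### Final assembly -/

/-- Idempotence of nf on arch-regime words. -/
lemma nf_idem {k : ℕ} {w : List Bool} (hk : archNum w < k) : nf k (nf k w) = nf k w := by
  have hs : SimonCongr k w (nf k w) := nf_sound w.length w le_rfl k hk
  have ha : archNum (nf k w) = archNum w := archNum_nf w.length w le_rfl k hk
  exact nf_complete (nf k w).length (nf k w) le_rfl w k (by omega) hk (simonSymm hs)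

lemma class_count (k m : ℕ) (hm : m < k) :
    {S : Set (List Bool) | ∃ w : List Bool,
        iotaUniv w = m ∧ S = {w' : List Bool | SimonCongr k w' w}}.ncard =
      (NF (k - m) m 0 ∪ NF (k - m) m 1 ∪ NF (k - m) m 2).card := by
  set c := k - m with hc
  have hck : c + m = k := by omega
  set g : List Bool → Set (List Bool) := fun u => {w' | SimonCongr k w' u} with hg
  set N' : Set (List Bool) := ↑(NF c m 0 ∪ NF c m 1 ∪ NF c m 2) with hN'
  have hNmem : ∀ u, u ∈ N' ↔ u ∈ NF c m 0 ∪ NF c m 1 ∪ NF c m 2 := fun u => Iff.rfl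
  have hNarch : ∀ u ∈ N', archNum u = m := by
    intro u hu
    rw [hNmem] at hu
    simp only [Finset.mem_union] at hu
    rcases hu with (h | h) | h
    exacts [NF_arch m 0 u h, NF_arch m 1 u h, NF_arch m 2 u h]
  have hNnf : ∀ u ∈ N', nf k u = u := by
    intro u hu
    rw [hNmem] at hu
    rw [← hck]
    simp only [Finset.mem_union] at hu
    rcases hu with (h | h) | h
    exacts [NF_normal m 0 u h, NF_normal m 1 u h, NF_normal m 2 u h]
  have himg : {S : Set (List Bool) | ∃ w : List Bool,
      iotaUniv w = m ∧ S = {w' : List Bool | SimonCongr k w' w}} = g '' N' := by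
    ext S
    simp only [Set.mem_setOf_eq, Set.mem_image]
    constructor
    · rintro ⟨w, hw, rfl⟩
      rw [iotaUniv_eq_archNum] at hw
      have hwk : archNum w < k := by omega
      have hsw : SimonCongr k w (nf k w) := nf_sound w.length w le_rfl k hwk
      have hanf : archNum (nf k w) = m := by rw [archNum_nf w.length w le_rfl k hwk, hw]
      refine ⟨nf k w, ?_, ?_⟩
      · exact NF_complete_set m (nf k w) hanf (by rw [hck]; exact nf_idem hwk)
      · rw [hg]
        ext w'
        simp only [Set.mem_setOf_eq]
        exact ⟨fun h' => simonTrans h' (simonSymm hsw), fun h' => simonTrans h' hsw⟩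
    · rintro ⟨u, hu, rfl⟩
      exact ⟨u, by rw [iotaUniv_eq_archNum]; exact hNarch u hu, rfl⟩
  have hinj : Set.InjOn g N' := by
    intro u hu v hv hgu
    have h1 : u ∈ g u := simonRefl k u
    rw [hgu] at h1
    have h2 : SimonCongr k u v := h1
    have := nf_complete u.length u le_rfl v k
      (by rw [hNarch u hu]; omega) (by rw [hNarch v hv]; omega) h2
    rw [hNnf u hu, hNnf v hv] at this
    exact this
  rw [himg, Set.ncard_image_of_injOn hinj, hN', Set.ncard_coe_finset]

/-- Matrix power identification. -/
lemma vec_eq {k m : ℕ} (hm : m < k) :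
    ∀ M : ℕ, ((matD k m) ^ M).mulVec (vecE k m) = fun i => ((vnat (k - m) M i : ℕ) : ℤ) := by
  have hc : ((k : ℤ) - (m : ℤ)) = ((k - m : ℕ) : ℤ) := by omega
  intro M
  induction M with
  | zero =>
    rw [pow_zero, Matrix.one_mulVec]
    funext i
    rcases fin3_cases i with rfl | rfl | rfl <;> simp [vecE, vnat, hc]
  | succ M ih =>
    rw [pow_succ', ← Matrix.mulVec_mulVec, ih]
    funext i
    rcases fin3_cases i with rfl | rfl | rfl <;>
      simp [matD, Matrix.mulVec, dotProduct, Fin.sum_univ_three, vnat, hc] <;>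
      push_cast <;> ring


end BinSimon

/-- the number of classes of `∼ₖ` of binary words with exactly `m`
arches equals `‖D^m · e‖₁`. -/
theorem binary_class_count_arches (k m : ℕ) (hm : m < k) :
    ({S : Set (List Bool) | ∃ w : List Bool,
        iotaUniv w = m ∧ S = {w' : List Bool | SimonCongr k w' w}}.ncard : ℤ)
      = ∑ i, ((matD k m) ^ m).mulVec (vecE k m) i := by
  rw [BinSimon.class_count k m hm, BinSimon.vec_eq hm m, Fin.sum_univ_three]
  rw [Finset.card_union_of_disjoint (by
      rw [Finset.disjoint_union_left]
      exact ⟨BinSimon.NF_disj m (by decide), BinSimon.NF_disj m (by decide)⟩),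
    Finset.card_union_of_disjoint (BinSimon.NF_disj m (by decide)),
    BinSimon.NF_card, BinSimon.NF_card, BinSimon.NF_card]
  push_cast
  ring
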